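/- For every group homomorphism φ : S₁₈ → Aut(H) satisfying φ(σ)(x_i) = x_{σ(i)}, φ(σ)(y_i) = y_{σ(i)} and φ(σ)(z) = z for all σ and i, the center of the semidirect product H ⋊_φ S₁₈ is exactly the (infinite cyclic) subgroup generated by the image of z. -/

import Mathlib

open Matrix

/-- Heisenberg model group ℤ¹⁸ × ℤ¹⁸ × ℤ. -/
@[ext] structure Heis : Type where
  a : Fin 18 → ℤ
  b : Fin 18 → ℤ
  c : ℤ

namespace Heis

instance : Mul Heis := ⟨fun p q => ⟨p.a + q.a, p.b + q.b, p.c + q.c + p.a ⬝ᵥ q.b⟩⟩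
instance : One Heis := ⟨⟨0, 0, 0⟩⟩
instance : Inv Heis := ⟨fun p => ⟨-p.a, -p.b, -p.c + p.a ⬝ᵥ p.b⟩⟩

lemma mul_def (p q : Heis) : p * q = ⟨p.a + q.a, p.b + q.b, p.c + q.c + p.a ⬝ᵥ q.b⟩ := rfl
lemma one_def : (1 : Heis) = ⟨0, 0, 0⟩ := rfl
lemma inv_def (p : Heis) : p⁻¹ = ⟨-p.a, -p.b, -p.c + p.a ⬝ᵥ p.b⟩ := rfl

instance : Group Heis where
  mul_assoc p q r := by
    ext1 <;> simp [mul_def, add_dotProduct, dotProduct_add] <;> [skip; skip; ring] <;>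
      abel
  one_mul p := by ext1 <;> simp [mul_def, one_def]
  mul_one p := by ext1 <;> simp [mul_def, one_def]
  inv_mul_cancel p := by
    ext1 <;> simp [mul_def, inv_def, one_def, neg_dotProduct] <;> ring

/-- The central copy of ℤ. -/
def zeta : Multiplicative ℤ →* Heis where
  toFun c := ⟨0, 0, c.toAdd⟩
  map_one' := rfl
  map_mul' p q := by simp [mul_def]

end Heis



/-- Generators of the group `H`: `x i`, `y i` for `i : Fin 18`, and `z`. -/
inductive HGen : Type
  | x : Fin 18 → HGen
  | y : Fin 18 → HGen
  | z : HGen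

/-- The free-group generator corresponding to `x i`. -/
def fx (i : Fin 18) : FreeGroup HGen := FreeGroup.of (HGen.x i)
/-- The free-group generator corresponding to `y i`. -/
def fy (i : Fin 18) : FreeGroup HGen := FreeGroup.of (HGen.y i)
/-- The free-group generator corresponding to `z`. -/
def fz : FreeGroup HGen := FreeGroup.of HGen.z

/-- The relations of the presentation of `H`:
`[xᵢ, xⱼ] = [yᵢ, yⱼ] = [xᵢ, yⱼ] = 1` for `i ≠ j`, `[xᵢ, yᵢ] = z`,
and `z` commutes with all the generators. -/
def HRels : Set (FreeGroup HGen) :=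
  { r | (∃ i j : Fin 18, i ≠ j ∧ r = fx i * fx j * (fx i)⁻¹ * (fx j)⁻¹)
      ∨ (∃ i j : Fin 18, i ≠ j ∧ r = fy i * fy j * (fy i)⁻¹ * (fy j)⁻¹)
      ∨ (∃ i j : Fin 18, i ≠ j ∧ r = fx i * fy j * (fx i)⁻¹ * (fy j)⁻¹)
      ∨ (∃ i : Fin 18, r = fx i * fy i * (fx i)⁻¹ * (fy i)⁻¹ * fz⁻¹)
      ∨ (∃ i : Fin 18, r = fx i * fz * (fx i)⁻¹ * fz⁻¹)
      ∨ (∃ i : Fin 18, r = fy i * fz * (fy i)⁻¹ * fz⁻¹) }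

/-- The group `H`, given by the above presentation. -/
abbrev Hgrp : Type := PresentedGroup HRels

/-- The generator `xᵢ` of `H`. -/
def xH (i : Fin 18) : Hgrp := PresentedGroup.of (HGen.x i)
/-- The generator `yᵢ` of `H`. -/
def yH (i : Fin 18) : Hgrp := PresentedGroup.of (HGen.y i)
/-- The generator `z` of `H`. -/
def zH : Hgrp := PresentedGroup.of HGen.z



-- relations in Hgrp
lemma relH {r : FreeGroup HGen} (hr : r ∈ HRels) : PresentedGroup.mk HRels r = 1 :=
  (QuotientGroup.eq_one_iff r).mpr (Subgroup.subset_normalClosure hr)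

lemma hxx (i j : Fin 18) : Commute (xH i) (xH j) := by
  rcases eq_or_ne i j with rfl | h
  · exact Commute.refl _
  · have h1 := relH (Or.inl ⟨i, j, h, rfl⟩)
    simp only [_root_.map_mul, _root_.map_inv] at h1
    change xH i * xH j * (xH i)⁻¹ * (xH j)⁻¹ = 1 at h1
    rw [mul_inv_eq_one, mul_inv_eq_iff_eq_mul] at h1
    exact h1

lemma hyy (i j : Fin 18) : Commute (yH i) (yH j) := by
  rcases eq_or_ne i j with rfl | h
  · exact Commute.refl _
  · have h1 := relH (Or.inr (Or.inl ⟨i, j, h, rfl⟩))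
    simp only [_root_.map_mul, _root_.map_inv] at h1
    change yH i * yH j * (yH i)⁻¹ * (yH j)⁻¹ = 1 at h1
    rw [mul_inv_eq_one, mul_inv_eq_iff_eq_mul] at h1
    exact h1

lemma hxy {i j : Fin 18} (h : i ≠ j) : Commute (xH i) (yH j) := by
  have h1 := relH (Or.inr (Or.inr (Or.inl ⟨i, j, h, rfl⟩)))
  simp only [_root_.map_mul, _root_.map_inv] at h1
  change xH i * yH j * (xH i)⁻¹ * (yH j)⁻¹ = 1 at h1
  rw [mul_inv_eq_one, mul_inv_eq_iff_eq_mul] at h1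
  exact h1

lemma hxyz (i : Fin 18) : xH i * yH i = zH * (yH i * xH i) := by
  have h1 := relH (Or.inr (Or.inr (Or.inr (Or.inl ⟨i, rfl⟩))))
  simp only [_root_.map_mul, _root_.map_inv] at h1
  change xH i * yH i * (xH i)⁻¹ * (yH i)⁻¹ * zH⁻¹ = 1 at h1
  rw [mul_inv_eq_one, mul_inv_eq_iff_eq_mul, mul_inv_eq_iff_eq_mul] at h1
  rw [h1, mul_assoc]

lemma hxz (i : Fin 18) : Commute (xH i) zH := by
  have h1 := relH (Or.inr (Or.inr (Or.inr (Or.inr (Or.inl ⟨i, rfl⟩)))))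
  simp only [_root_.map_mul, _root_.map_inv] at h1
  change xH i * zH * (xH i)⁻¹ * zH⁻¹ = 1 at h1
  rw [mul_inv_eq_one, mul_inv_eq_iff_eq_mul] at h1
  exact h1

lemma hyz (i : Fin 18) : Commute (yH i) zH := by
  have h1 := relH (Or.inr (Or.inr (Or.inr (Or.inr (Or.inr ⟨i, rfl⟩)))))
  simp only [_root_.map_mul, _root_.map_inv] at h1
  change yH i * zH * (yH i)⁻¹ * zH⁻¹ = 1 at h1
  rw [mul_inv_eq_one, mul_inv_eq_iff_eq_mul] at h1
  exact h1

/-- `z` is central in `H`. -/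
lemma zc (g : Hgrp) : Commute zH g := by
  have hg : g ∈ Subgroup.closure (Set.range (PresentedGroup.of : HGen → Hgrp)) := by
    rw [PresentedGroup.closure_range_of]; trivial
  induction hg using Subgroup.closure_induction with
  | mem x hx =>
    obtain ⟨gen, rfl⟩ := hx
    cases gen with
    | x i => exact (hxz i).symm
    | y i => exact (hyz i).symm
    | z => exact Commute.refl _
  | one => exact Commute.one_right _
  | mul x y _ _ hx hy => exact hx.mul_right hy
  | inv x _ hx => exact hx.inv_right

/-- Images of the generators in the Heisenberg model. -/
def fH : HGen → Heis
  | HGen.x i => ⟨Pi.single i 1, 0, 0⟩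
  | HGen.y i => ⟨0, Pi.single i 1, 0⟩
  | HGen.z => ⟨0, 0, 1⟩

lemma fH_rels : ∀ r ∈ HRels, FreeGroup.lift fH r = 1 := by
  rintro r (⟨i,j,hij,rfl⟩|⟨i,j,hij,rfl⟩|⟨i,j,hij,rfl⟩|⟨i,rfl⟩|⟨i,rfl⟩|⟨i,rfl⟩) <;>
      simp only [_root_.map_mul, _root_.map_inv, fx, fy, fz, FreeGroup.lift_apply_of, fH] <;>
      ext1 <;>
      simp [Heis.mul_def, Heis.inv_def, Heis.one_def, single_dotProduct,
        Pi.single_apply]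
  exact fun h => hij h.symm

/-- The homomorphism from `H` to the Heisenberg model. -/
def piH : Hgrp →* Heis := PresentedGroup.toGroup fH_rels

lemma piH_z : piH zH = Heis.zeta (Multiplicative.ofAdd 1) := by
  simp [piH, zH, PresentedGroup.toGroup.of, fH, Heis.zeta]

lemma z_pow_ne (n : ℤ) (hn : zH ^ n = 1) : n = 0 := by
  have h1 : piH (zH ^ n) = 1 := by rw [hn, _root_.map_one]
  rw [map_zpow, piH_z, ← map_zpow, ← ofAdd_zsmul] at h1
  have := congrArg Heis.c h1
  simpa [Heis.zeta, Heis.one_def] using this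

lemma aux_move (u v w E : Hgrp) (h1 : u * v = w * (v * u)) (h2 : Commute u E) :
    u * (v * E) = w * (v * E * u) := by
  calc u * (v * E) = (u * v) * E := (mul_assoc _ _ _).symm
    _ = w * (v * u) * E := by rw [h1]
    _ = w * (v * (u * E)) := by simp only [mul_assoc]
    _ = w * (v * (E * u)) := by rw [h2.eq]
    _ = w * (v * E * u) := by rw [mul_assoc]

/-- Product of the `xᵢ` raised to the powers `a i`. -/
def XP (a : Fin 18 → ℤ) : Hgrp :=
  Finset.univ.noncommProd (fun i => xH i ^ a i)
    (Set.pairwise_of_forall _ _ fun i j => (hxx i j).zpow_zpow _ _)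

/-- Product of the `yᵢ` raised to the powers `b i`. -/
def YP (b : Fin 18 → ℤ) : Hgrp :=
  Finset.univ.noncommProd (fun i => yH i ^ b i)
    (Set.pairwise_of_forall _ _ fun i j => (hyy i j).zpow_zpow _ _)

lemma XP_split (a : Fin 18 → ℤ) (j : Fin 18) :
    XP a = xH j ^ a j * (Finset.univ.erase j).noncommProd (fun i => xH i ^ a i)
      (Set.pairwise_of_forall _ _ fun i k => (hxx i k).zpow_zpow _ _) := by
  rw [XP, Finset.noncommProd_congr (Finset.insert_erase (Finset.mem_univ j)).symm
      (fun _ _ => rfl) _]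
  exact Finset.noncommProd_insert_of_notMem _ _ _ _ (Finset.notMem_erase j _)

lemma YP_split (b : Fin 18 → ℤ) (j : Fin 18) :
    YP b = yH j ^ b j * (Finset.univ.erase j).noncommProd (fun i => yH i ^ b i)
      (Set.pairwise_of_forall _ _ fun i k => (hyy i k).zpow_zpow _ _) := by
  rw [YP, Finset.noncommProd_congr (Finset.insert_erase (Finset.mem_univ j)).symm
      (fun _ _ => rfl) _]
  exact Finset.noncommProd_insert_of_notMem _ _ _ _ (Finset.notMem_erase j _)

lemma XP_add_single (a : Fin 18 → ℤ) (j : Fin 18) :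
    XP (a + Pi.single j 1) = xH j * XP a := by
  rw [XP_split (a + Pi.single j 1) j, XP_split a j,
    Finset.noncommProd_congr rfl
      (g := fun i => xH i ^ a i)
      (fun i hi => by rw [Pi.add_apply, Pi.single_eq_of_ne (Finset.ne_of_mem_erase hi), add_zero]) _,
    Pi.add_apply, Pi.single_eq_same, add_comm (a j) 1, _root_.zpow_one_add, mul_assoc]

lemma YP_add_single (b : Fin 18 → ℤ) (j : Fin 18) :
    YP (b + Pi.single j 1) = yH j * YP b := by
  rw [YP_split (b + Pi.single j 1) j, YP_split b j,
    Finset.noncommProd_congr rfl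
      (g := fun i => yH i ^ b i)
      (fun i hi => by rw [Pi.add_apply, Pi.single_eq_of_ne (Finset.ne_of_mem_erase hi), add_zero]) _,
    Pi.add_apply, Pi.single_eq_same, add_comm (b j) 1, _root_.zpow_one_add, mul_assoc]

lemma zcp (n : ℤ) (g : Hgrp) : Commute (zH ^ n) g := (zc g).zpow_left n

lemma y_x_pow (j : Fin 18) (n : ℤ) :
    yH j * xH j ^ n = zH ^ (-n) * (xH j ^ n * yH j) := by
  have hsc : SemiconjBy (yH j) (xH j) (zH⁻¹ * xH j) := by
    show yH j * xH j = zH⁻¹ * xH j * yH j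
    rw [mul_assoc, hxyz j, inv_mul_cancel_left]
  have h2 := hsc.zpow_right n
  rw [SemiconjBy] at h2
  rw [h2, ((zc (xH j)).inv_left).mul_zpow, _root_.inv_zpow', mul_assoc]

lemma x_y_pow (j : Fin 18) (n : ℤ) :
    xH j * yH j ^ n = zH ^ n * (yH j ^ n * xH j) := by
  have hsc : SemiconjBy (xH j) (yH j) (zH * yH j) := by
    show xH j * yH j = zH * yH j * xH j
    rw [hxyz j, mul_assoc]
  have h2 := hsc.zpow_right n
  rw [SemiconjBy] at h2
  rw [h2, ((zc (yH j)).mul_zpow), mul_assoc]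

lemma y_XP (j : Fin 18) (a : Fin 18 → ℤ) :
    yH j * XP a = zH ^ (-(a j)) * (XP a * yH j) := by
  rw [XP_split a j]
  exact aux_move _ _ _ _ (y_x_pow j (a j))
    (Finset.noncommProd_commute _ _ _ _
      (fun i hi => ((hxy (Finset.ne_of_mem_erase hi)).symm).zpow_right _))

lemma x_YP (j : Fin 18) (b : Fin 18 → ℤ) :
    xH j * YP b = zH ^ (b j) * (YP b * xH j) := by
  rw [YP_split b j]
  exact aux_move _ _ _ _ (x_y_pow j (b j))
    (Finset.noncommProd_commute _ _ _ _
      (fun i hi => (hxy (Finset.ne_of_mem_erase hi).symm).zpow_right _))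

lemma x_commute_XP (j : Fin 18) (a : Fin 18 → ℤ) : Commute (xH j) (XP a) :=
  Finset.noncommProd_commute _ _ _ _ (fun i _ => (hxx j i).zpow_right _)

lemma y_commute_YP (j : Fin 18) (b : Fin 18 → ℤ) : Commute (yH j) (YP b) :=
  Finset.noncommProd_commute _ _ _ _ (fun i _ => (hyy j i).zpow_right _)

lemma XP_zero : XP 0 = 1 := by
  rw [XP, Finset.noncommProd_eq_pow_card _ _ _ 1 (fun i _ => by simp), one_pow]

lemma YP_zero : YP 0 = 1 := by
  rw [YP, Finset.noncommProd_eq_pow_card _ _ _ 1 (fun i _ => by simp), one_pow]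

lemma of_x (i : Fin 18) : (PresentedGroup.of (HGen.x i) : Hgrp) = xH i := rfl
lemma of_y (i : Fin 18) : (PresentedGroup.of (HGen.y i) : Hgrp) = yH i := rfl
lemma of_z : (PresentedGroup.of HGen.z : Hgrp) = zH := rfl

lemma aux_swap (u E w : Hgrp) (h : u * E = w * (E * u)) : E * u = w⁻¹ * (u * E) := by
  rw [h, inv_mul_cancel_left]

lemma aux_inv (u E w : Hgrp) (h : u * E = w * (E * u)) (hw : ∀ g : Hgrp, Commute w g) :
    u⁻¹ * E = w⁻¹ * (E * u⁻¹) := by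
  have h2 : E * u⁻¹ = w * (u⁻¹ * E) := by
    calc E * u⁻¹ = u⁻¹ * (u * E) * u⁻¹ := by rw [inv_mul_cancel_left]
      _ = u⁻¹ * (w * (E * u)) * u⁻¹ := by rw [h]
      _ = u⁻¹ * (w * (E * (u * u⁻¹))) := by simp only [mul_assoc]
      _ = u⁻¹ * (w * E) := by rw [mul_inv_cancel, mul_one]
      _ = (u⁻¹ * w) * E := by rw [mul_assoc]
      _ = (w * u⁻¹) * E := by rw [← (hw u⁻¹).eq]
      _ = w * (u⁻¹ * E) := by rw [mul_assoc]
  rw [h2, inv_mul_cancel_left]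

/-- Every element of `H` has a normal form `XP a * YP b * z^c`. -/
lemma nf (g : Hgrp) : ∃ a b : Fin 18 → ℤ, ∃ c : ℤ, g = XP a * YP b * zH ^ c := by
  have hg : g ∈ Subgroup.closure (Set.range (PresentedGroup.of : HGen → Hgrp)) := by
    rw [PresentedGroup.closure_range_of]; trivial
  induction hg using Subgroup.closure_induction_left with
  | one => exact ⟨0, 0, 0, by simp [XP_zero, YP_zero]⟩
  | mul_left x hx y hy ih =>
    obtain ⟨gen, rfl⟩ := hx
    obtain ⟨a, b, c, rfl⟩ := ih
    cases gen with
    | x i =>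
      exact ⟨a + Pi.single i 1, b, c, by rw [of_x, XP_add_single]; simp only [mul_assoc]⟩
    | y i =>
      refine ⟨a, b + Pi.single i 1, c + (-(a i)), ?_⟩
      rw [of_y]
      calc yH i * (XP a * YP b * zH ^ c)
          = (yH i * XP a) * (YP b * zH ^ c) := by simp only [mul_assoc]
        _ = (zH ^ (-(a i)) * (XP a * yH i)) * (YP b * zH ^ c) := by rw [y_XP]
        _ = zH ^ (-(a i)) * (XP a * ((yH i * YP b) * zH ^ c)) := by simp only [mul_assoc]
        _ = zH ^ (-(a i)) * (XP a * (YP (b + Pi.single i 1) * zH ^ c)) := by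
              rw [YP_add_single]
        _ = (XP a * (YP (b + Pi.single i 1) * zH ^ c)) * zH ^ (-(a i)) := (zcp _ _).eq
        _ = XP a * YP (b + Pi.single i 1) * (zH ^ c * zH ^ (-(a i))) := by
              simp only [mul_assoc]
        _ = XP a * YP (b + Pi.single i 1) * zH ^ (c + -(a i)) := by rw [← _root_.zpow_add]
    | z =>
      refine ⟨a, b, c + 1, ?_⟩
      rw [of_z]
      calc zH * (XP a * YP b * zH ^ c)
          = (XP a * YP b * zH ^ c) * zH := (zc _).eq
        _ = XP a * YP b * (zH ^ c * zH ^ (1:ℤ)) := by rw [_root_.zpow_one]; simp only [mul_assoc]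
        _ = XP a * YP b * zH ^ (c + 1) := by rw [← _root_.zpow_add]
  | inv_mul_cancel x hx y hy ih =>
    obtain ⟨gen, rfl⟩ := hx
    obtain ⟨a, b, c, rfl⟩ := ih
    cases gen with
    | x i =>
      refine ⟨a - Pi.single i 1, b, c, ?_⟩
      have hXa : XP a = xH i * XP (a - Pi.single i 1) := by
        rw [← XP_add_single, sub_add_cancel]
      rw [of_x, hXa]
      simp only [mul_assoc, inv_mul_cancel_left]
    | y i =>
      refine ⟨a, b - Pi.single i 1, c + a i, ?_⟩
      have hYb : YP b = yH i * YP (b - Pi.single i 1) := by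
        rw [← YP_add_single, sub_add_cancel]
      have hinv := aux_inv (yH i) (XP a) (zH ^ (-(a i))) (y_XP i a) (fun g => zcp _ g)
      rw [of_y]
      calc (yH i)⁻¹ * (XP a * YP b * zH ^ c)
          = ((yH i)⁻¹ * XP a) * (YP b * zH ^ c) := by simp only [mul_assoc]
        _ = ((zH ^ (-(a i)))⁻¹ * (XP a * (yH i)⁻¹)) * (YP b * zH ^ c) := by rw [hinv]
        _ = (zH ^ (-(a i)))⁻¹ * (XP a * (((yH i)⁻¹ * YP b) * zH ^ c)) := by
              simp only [mul_assoc]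
        _ = (zH ^ (-(a i)))⁻¹ * (XP a * (YP (b - Pi.single i 1) * zH ^ c)) := by
              rw [hYb, inv_mul_cancel_left]
        _ = zH ^ (a i) * (XP a * (YP (b - Pi.single i 1) * zH ^ c)) := by
              rw [← _root_.zpow_neg, neg_neg]
        _ = (XP a * (YP (b - Pi.single i 1) * zH ^ c)) * zH ^ (a i) := (zcp _ _).eq
        _ = XP a * YP (b - Pi.single i 1) * (zH ^ c * zH ^ (a i)) := by
              simp only [mul_assoc]
        _ = XP a * YP (b - Pi.single i 1) * zH ^ (c + a i) := by rw [← _root_.zpow_add]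
    | z =>
      refine ⟨a, b, c + (-1), ?_⟩
      rw [of_z]
      calc zH⁻¹ * (XP a * YP b * zH ^ c)
          = (XP a * YP b * zH ^ c) * zH⁻¹ := ((zc _).inv_left).eq
        _ = XP a * YP b * (zH ^ c * zH ^ (-1:ℤ)) := by rw [_root_.zpow_neg_one]; simp only [mul_assoc]
        _ = XP a * YP b * zH ^ (c + -1) := by rw [← _root_.zpow_add]

/-- Central elements of `H` are powers of `z`. -/
lemma central_H {h : Hgrp} (hc : ∀ g : Hgrp, g * h = h * g) : ∃ c : ℤ, h = zH ^ c := by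
  obtain ⟨a, b, c, rfl⟩ := nf h
  have hb : ∀ j, b j = 0 := by
    intro j
    have h1 := hc (xH j)
    have h2 : (XP a * YP b * zH ^ c) * xH j
        = (zH ^ (b j))⁻¹ * (xH j * (XP a * YP b * zH ^ c)) := by
      calc (XP a * YP b * zH ^ c) * xH j
          = XP a * (YP b * (zH ^ c * xH j)) := by simp only [mul_assoc]
        _ = XP a * (YP b * (xH j * zH ^ c)) := by rw [← ((zcp c (xH j)).eq)]
        _ = XP a * ((YP b * xH j) * zH ^ c) := by simp only [mul_assoc]
        _ = XP a * (((zH ^ (b j))⁻¹ * (xH j * YP b)) * zH ^ c) := by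
              rw [aux_swap _ _ _ (x_YP j b)]
        _ = (XP a * (zH ^ (b j))⁻¹) * (xH j * (YP b * zH ^ c)) := by simp only [mul_assoc]
        _ = ((zH ^ (b j))⁻¹ * XP a) * (xH j * (YP b * zH ^ c)) := by
              rw [(((zcp (b j) (XP a)).inv_left).eq).symm]
        _ = (zH ^ (b j))⁻¹ * ((XP a * xH j) * (YP b * zH ^ c)) := by simp only [mul_assoc]
        _ = (zH ^ (b j))⁻¹ * ((xH j * XP a) * (YP b * zH ^ c)) := by
              rw [← (x_commute_XP j a).eq]
        _ = (zH ^ (b j))⁻¹ * (xH j * (XP a * YP b * zH ^ c)) := by simp only [mul_assoc]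
    rw [h1] at h2
    have h3 : (zH ^ (b j))⁻¹ = 1 := (right_eq_mul.mp h2).symm ▸ rfl
    have h4 : zH ^ (b j) = 1 := by rwa [inv_eq_one] at h3
    exact z_pow_ne _ h4
  have ha : ∀ j, a j = 0 := by
    intro j
    have h1 := hc (yH j)
    have h2 : (XP a * YP b * zH ^ c) * yH j
        = (zH ^ (-(a j)))⁻¹ * (yH j * (XP a * YP b * zH ^ c)) := by
      calc (XP a * YP b * zH ^ c) * yH j
          = XP a * (YP b * (zH ^ c * yH j)) := by simp only [mul_assoc]
        _ = XP a * (YP b * (yH j * zH ^ c)) := by rw [← ((zcp c (yH j)).eq)]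
        _ = XP a * ((YP b * yH j) * zH ^ c) := by simp only [mul_assoc]
        _ = XP a * ((yH j * YP b) * zH ^ c) := by rw [(y_commute_YP j b).eq]
        _ = (XP a * yH j) * (YP b * zH ^ c) := by simp only [mul_assoc]
        _ = ((zH ^ (-(a j)))⁻¹ * (yH j * XP a)) * (YP b * zH ^ c) := by
              rw [aux_swap _ _ _ (y_XP j a)]
        _ = (zH ^ (-(a j)))⁻¹ * (yH j * (XP a * YP b * zH ^ c)) := by simp only [mul_assoc]
    rw [h1] at h2
    have h3 : (zH ^ (-(a j)))⁻¹ = 1 := (right_eq_mul.mp h2).symm ▸ rfl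
    have h4 : zH ^ (-(a j)) = 1 := by rwa [inv_eq_one] at h3
    have := z_pow_ne _ h4
    omega
  have hA : a = 0 := funext fun j => ha j
  have hB : b = 0 := funext fun j => hb j
  exact ⟨c, by rw [hA, hB, XP_zero, YP_zero, one_mul, one_mul]⟩

/-- For every index-permutation action `φ : S₁₈ → Aut(H)` (fixing `z`), the
center of the semidirect product `H ⋊[φ] S₁₈` is exactly the infinite cyclic
subgroup generated by the image of `z`. -/
theorem stmt14 (φ : Equiv.Perm (Fin 18) →* MulAut Hgrp)
    (hφx : ∀ (σ : Equiv.Perm (Fin 18)) (i : Fin 18), φ σ (xH i) = xH (σ i))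
    (hφy : ∀ (σ : Equiv.Perm (Fin 18)) (i : Fin 18), φ σ (yH i) = yH (σ i))
    (hφz : ∀ σ : Equiv.Perm (Fin 18), φ σ zH = zH) :
    Subgroup.center (Hgrp ⋊[φ] Equiv.Perm (Fin 18))
        = Subgroup.closure {SemidirectProduct.inl zH} ∧
      ¬ IsOfFinOrder (SemidirectProduct.inl zH : Hgrp ⋊[φ] Equiv.Perm (Fin 18)) := by
  constructor
  · apply le_antisymm
    · intro g hg
      have hg' := Subgroup.mem_center_iff.mp hg
      have key : ∀ p q : Fin 18, ∃ c : Fin 18, c ≠ p ∧ c ≠ q := by decide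
      have hr : g.right = 1 := by
        refine Equiv.ext fun p => ?_
        simp only [Equiv.Perm.one_apply]
        by_contra hp
        obtain ⟨cc, hc1, hc2⟩ := key p (g.right p)
        have hcom := hg' (SemidirectProduct.inr (Equiv.swap p cc))
        have hright := congrArg SemidirectProduct.right hcom
        simp only [SemidirectProduct.mul_right, SemidirectProduct.right_inr] at hright
        have happ := congrArg (fun π : Equiv.Perm (Fin 18) => π p) hright
        simp only [Equiv.Perm.mul_apply, Equiv.swap_apply_left] at happ
        rw [Equiv.swap_apply_of_ne_of_ne hp (fun hh => hc2 hh.symm)] at happ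
        exact hc1 (g.right.injective happ.symm)
      have hcen : ∀ k : Hgrp, k * g.left = g.left * k := by
        intro k
        have hcom := hg' (SemidirectProduct.inl k)
        have hleft := congrArg SemidirectProduct.left hcom
        simp only [SemidirectProduct.mul_left, SemidirectProduct.left_inl,
          SemidirectProduct.right_inl, _root_.map_one, MulAut.one_apply, hr] at hleft
        exact hleft
      obtain ⟨cz, hcz⟩ := central_H hcen
      have hgeq : g = SemidirectProduct.inl (zH ^ cz) := by
        apply SemidirectProduct.ext
        · rw [SemidirectProduct.left_inl, hcz]
        · rw [SemidirectProduct.right_inl, hr]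
      rw [hgeq, map_zpow]
      exact Subgroup.zpow_mem _ (Subgroup.subset_closure (Set.mem_singleton _)) cz
    · rw [Subgroup.closure_le]
      intro w hw
      rw [Set.mem_singleton_iff] at hw
      subst hw
      rw [SetLike.mem_coe, Subgroup.mem_center_iff]
      intro k
      apply SemidirectProduct.ext
      · simp only [SemidirectProduct.mul_left, SemidirectProduct.left_inl,
          SemidirectProduct.right_inl, _root_.map_one, MulAut.one_apply, hφz]
        exact ((zc k.left).eq).symm
      · simp only [SemidirectProduct.mul_right, SemidirectProduct.right_inl, mul_one, one_mul]
  · intro hfin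
    obtain ⟨n, hn, h1⟩ := isOfFinOrder_iff_pow_eq_one.mp hfin
    rw [← map_pow] at h1
    have h2 : zH ^ n = 1 :=
      SemidirectProduct.inl_injective (h1.trans (_root_.map_one SemidirectProduct.inl).symm)
    have h3 : (n : ℤ) = 0 := z_pow_ne n (by rw [zpow_natCast, h2])
    omega
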